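/- arXiv:2305.14311 — 2 statements merged into one kernel-verified Lean document; each statement's English description precedes it below -/
import Mathlib

section
/- Let A be a ρ-replicable learning algorithm with randomness source R: Pr_{S,S'~D^n, r~R}[A(S,r) ≠ A(S',r)] ≤ ρ. Then for any ν ∈ [ρ,1), with probability at least 1−ν over r ~ R, there exists a hypothesis h (depending on r) such that Pr_{S~D^n}[A(S,r) = h] ≥ 1 − ρ/ν. -/
open MeasureTheory

/-- A ρ-replicable algorithm is (1 − ρ/ν, 1 − ν)-pseudo-globally stable:
with probability at least 1 − ν over the random string r, there is a hypothesis
output with probability at least 1 − ρ/ν over the sample. -/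
theorem replicable_implies_pseudo_globally_stable
    {S H R : Type*} [MeasurableSpace S] [MeasurableSpace H] [MeasurableSpace R]
    (A : S → R → H)
    (Dn : Measure S) [IsProbabilityMeasure Dn]
    (ℛ : Measure R) [IsProbabilityMeasure ℛ]
    (ρ ν : ℝ)
    (hrep : (((Dn.prod Dn).prod ℛ) {x | A x.1.1 x.2 ≠ A x.1.2 x.2}).toReal ≤ ρ)
    (hν : ρ ≤ ν) (hν1 : ν < 1) :
    1 - ν ≤ (ℛ {r | ∃ h : H, 1 - ρ / ν ≤ (Dn {s | A s r = h}).toReal}).toReal := by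
  classical
  set t : ℝ := ρ / ν with ht
  have hρ0 : 0 ≤ ρ := le_trans ENNReal.toReal_nonneg hrep
  have hν0 : 0 ≤ ν := le_trans hρ0 hν
  have ht0 : 0 ≤ t := div_nonneg hρ0 hν0
  have ht1 : t ≤ 1 := by
    rcases eq_or_lt_of_le hν0 with h | h
    · have : ρ = 0 := le_antisymm (h ▸ hν) hρ0
      simp [ht, this]
    · rw [ht, div_le_one h]; exact hν
  set N : Set ((S × S) × R) := {x | A x.1.1 x.2 ≠ A x.1.2 x.2} with hN
  set T := toMeasurable ((Dn.prod Dn).prod ℛ) N with hT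
  have hTm : MeasurableSet T := measurableSet_toMeasurable _ _
  have hNT : N ⊆ T := subset_toMeasurable _ _
  set G : R → ENNReal := fun r => (Dn.prod Dn) ((fun p => (p, r)) ⁻¹' T) with hG
  have hGm : Measurable G := measurable_measure_prodMk_right hTm
  have hGint : ∫⁻ r, G r ∂ℛ = ((Dn.prod Dn).prod ℛ) N := by
    rw [hG, ← Measure.prod_apply_symm hTm, hT, measure_toMeasurable]
  have hNle : ((Dn.prod Dn).prod ℛ) N ≤ ENNReal.ofReal ρ := by
    rw [ENNReal.le_ofReal_iff_toReal_le (measure_ne_top _ _) hρ0]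
    exact hrep
  -- the bad set
  set bad : Set R := {r | ∀ h : H, (Dn {s | A s r = h}).toReal < 1 - t} with hbad
  -- pointwise claim on the bad set
  have key : ∀ r ∈ bad, ENNReal.ofReal t ≤ G r ∧ 0 < G r := by
    intro r hr
    set f : S → ENNReal := fun s => Dn (Prod.mk s ⁻¹' ((fun p => (p, r)) ⁻¹' T)) with hf
    have hfm : Measurable f := measurable_measure_prodMk_left (measurable_prodMk_right hTm)
    have hGr : G r = ∫⁻ s, f s ∂Dn := Measure.prod_apply (measurable_prodMk_right hTm)
    have hflt : ∀ s, ENNReal.ofReal t < f s := by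
      intro s
      set h0 := A s r with hh0
      have ha := hr h0
      have hb : Dn {s' | A s' r ≠ h0} ≤ f s := by
        apply measure_mono
        intro s' hs'
        have : ((s, s'), r) ∈ N := by
          simp only [hN, Set.mem_setOf_eq]
          exact fun hc => hs' hc.symm
        exact hNT this
      have hcover : (1 : ENNReal) ≤ Dn {s' | A s' r = h0} + Dn {s' | A s' r ≠ h0} := by
        have : (Set.univ : Set S) ⊆ {s' | A s' r = h0} ∪ {s' | A s' r ≠ h0} := by
          intro x _; by_cases hx : A x r = h0
          · exact Or.inl hx
          · exact Or.inr hx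
        calc (1 : ENNReal) = Dn Set.univ := (measure_univ (μ := Dn)).symm
          _ ≤ Dn ({s' | A s' r = h0} ∪ {s' | A s' r ≠ h0}) := measure_mono this
          _ ≤ _ := measure_union_le _ _
      have ha1 : Dn {s' | A s' r = h0} ≠ ⊤ := measure_ne_top _ _
      have hb1 : Dn {s' | A s' r ≠ h0} ≠ ⊤ := measure_ne_top _ _
      have htoReal : 1 ≤ (Dn {s' | A s' r = h0}).toReal + (Dn {s' | A s' r ≠ h0}).toReal := by
        have := ENNReal.toReal_mono (by finiteness) hcover
        rwa [ENNReal.toReal_one, ENNReal.toReal_add ha1 hb1] at this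
      have hbgt : t < (Dn {s' | A s' r ≠ h0}).toReal := by linarith [ha]
      have : ENNReal.ofReal t < Dn {s' | A s' r ≠ h0} :=
        (ENNReal.ofReal_lt_iff_lt_toReal ht0 hb1).mpr hbgt
      exact lt_of_lt_of_le this hb
    constructor
    · rw [hGr]
      calc ENNReal.ofReal t = ∫⁻ _, ENNReal.ofReal t ∂Dn := by simp
        _ ≤ ∫⁻ s, f s ∂Dn := lintegral_mono fun s => (hflt s).le
    · rw [hGr, lintegral_pos_iff_support hfm]
      have : Function.support f = Set.univ := by
        ext s; simp only [Function.mem_support, Set.mem_univ, iff_true]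
        exact fun hc => by simpa [hc] using hflt s
      rw [this]; simp
  -- bound the bad set's measure
  have hbadle : ℛ bad ≤ ENNReal.ofReal ν := by
    rcases eq_or_lt_of_le ht0 with ht0' | ht0'
    · -- t = 0, hence ρ = 0
      have hρ : ρ = 0 := by
        by_contra hρ
        have hρpos : 0 < ρ := lt_of_le_of_ne hρ0 (Ne.symm hρ)
        have hνpos : 0 < ν := lt_of_lt_of_le hρpos hν
        have : 0 < t := div_pos hρpos hνpos
        exact absurd ht0'.symm (ne_of_gt this)
      have hint0 : ∫⁻ r, G r ∂ℛ = 0 :=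
        le_antisymm (by rw [hGint]; simpa [hρ] using hNle) zero_le
      have hG0 : ∀ᵐ r ∂ℛ, G r = 0 := (lintegral_eq_zero_iff hGm).mp hint0
      have : ℛ bad ≤ ℛ {r | G r ≠ 0} := by
        apply measure_mono
        intro r hr
        exact fun hc => absurd ((key r hr).2) (by simp [hc])
      calc ℛ bad ≤ ℛ {r | G r ≠ 0} := this
        _ = 0 := by
            rw [ae_iff] at hG0
            simpa using hG0
        _ ≤ ENNReal.ofReal ν := zero_le
    · -- t > 0
      have hρpos : 0 < ρ := by
        by_contra hρ
        push_neg at hρ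
        have : ρ = 0 := le_antisymm hρ hρ0
        simp [ht, this] at ht0'
      have hνpos : 0 < ν := lt_of_lt_of_le hρpos hν
      have h1 : ℛ bad ≤ ℛ {r | ENNReal.ofReal t ≤ G r} :=
        measure_mono fun r hr => (key r hr).1
      have h2 : ℛ {r | ENNReal.ofReal t ≤ G r} ≤ (∫⁻ r, G r ∂ℛ) / ENNReal.ofReal t :=
        meas_ge_le_lintegral_div hGm.aemeasurable
          (by simpa using ne_of_gt (ENNReal.ofReal_pos.mpr ht0')) ENNReal.ofReal_ne_top
      have h3 : (∫⁻ r, G r ∂ℛ) / ENNReal.ofReal t ≤ ENNReal.ofReal ρ / ENNReal.ofReal t := by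
        apply ENNReal.div_le_div_right
        rw [hGint]; exact hNle
      have h4 : ENNReal.ofReal ρ / ENNReal.ofReal t = ENNReal.ofReal ν := by
        rw [← ENNReal.ofReal_div_of_pos ht0']
        congr 1
        field_simp [ht]
        rw [ht, div_mul_cancel₀ ρ hνpos.ne']
      calc ℛ bad ≤ _ := h1
        _ ≤ _ := h2
        _ ≤ _ := h3
        _ = _ := h4
  -- conclude
  set good : Set R := {r | ∃ h : H, 1 - t ≤ (Dn {s | A s r = h}).toReal} with hgood
  have hcompl : goodᶜ ⊆ bad := by
    intro r hr h
    by_contra hle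
    push_neg at hle
    exact hr ⟨h, hle⟩
  have hunion : (1 : ENNReal) ≤ ℛ good + ENNReal.ofReal ν := by
    calc (1 : ENNReal) = ℛ Set.univ := (measure_univ (μ := ℛ)).symm
      _ = ℛ (good ∪ goodᶜ) := by rw [Set.union_compl_self]
      _ ≤ ℛ good + ℛ goodᶜ := measure_union_le _ _
      _ ≤ ℛ good + ℛ bad := add_le_add_right (measure_mono hcompl) _
      _ ≤ ℛ good + ENNReal.ofReal ν := by gcongr
  have hfin : ℛ good ≠ ⊤ := measure_ne_top _ _
  have := ENNReal.toReal_mono (by finiteness) hunion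
  rw [ENNReal.toReal_one, ENNReal.toReal_add hfin ENNReal.ofReal_ne_top,
    ENNReal.toReal_ofReal hν0] at this
  linarith
end

section
/- (Bretagnolle–Huber–Carol inequality) Let p = (p₁,…,p_k) be a probability vector and let (p̂₁,…,p̂_k) be the empirical frequencies from n i.i.d. samples of the corresponding categorical distribution. Then for every ε ∈ (0,1), Pr[Σ_{i=1}^k |p̂_i − p_i| ≥ ε] ≤ 2^k exp(−nε²/2). -/
open MeasureTheory Real ProbabilityTheory


lemma bhc_core (p : ℝ) (hp0 : 0 ≤ p) (hp1 : p ≤ 1) (t : ℝ) :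
    (1 - p) * Real.exp (-(t * p)) + p * Real.exp (t * (1 - p)) ≤ Real.exp (t ^ 2 / 8) := by
  set c : ℝ → ℝ := fun s => 1 - p + p * Real.exp s with hc_def
  have hc : ∀ s, 0 < c s := by
    intro s
    rcases hp0.eq_or_lt with h | h
    · simp [hc_def, ← h]
    · have := (Real.exp_pos s)
      have : 0 < p * Real.exp s := mul_pos h this
      simp only [hc_def]
      nlinarith
  set g : ℝ → ℝ := fun s => s ^ 2 / 8 + s * p - Real.log (c s) with hg_def
  set g1 : ℝ → ℝ := fun s => s / 4 + p - p * Real.exp s / c s with hg1_def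
  have hcder : ∀ s, HasDerivAt c (p * Real.exp s) s := fun s =>
    ((Real.hasDerivAt_exp s).const_mul p).const_add (1 - p)
  have hder1 : ∀ s, HasDerivAt g (g1 s) s := by
    intro s
    have h1 : HasDerivAt (fun s : ℝ => s ^ 2 / 8 + s * p) (s / 4 + p) s := by
      have := ((hasDerivAt_pow 2 s).div_const 8).add ((hasDerivAt_id s).mul_const p)
      exact this.congr_deriv (by norm_num; ring)
    have h2 : HasDerivAt (fun s => Real.log (c s)) (p * Real.exp s / c s) s :=
      (hcder s).log (hc s).ne'
    exact h1.sub h2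
  have hder2 : ∀ s, HasDerivAt g1 (1 / 4 - p * Real.exp s * (1 - p) / (c s) ^ 2) s := by
    intro s
    have h1 : HasDerivAt (fun s : ℝ => s / 4 + p) (1 / 4) s := by
      simpa using ((hasDerivAt_id s).div_const 4).add_const p
    have h2 : HasDerivAt (fun s => p * Real.exp s / c s)
        ((p * Real.exp s * c s - p * Real.exp s * (p * Real.exp s)) / (c s) ^ 2) s :=
      ((Real.hasDerivAt_exp s).const_mul p).div (hcder s) (hc s).ne'
    have := h1.sub h2
    have hcs := (hc s).ne'
    exact this.congr_deriv (by field_simp; ring)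
  have hg2 : ∀ s, 0 ≤ 1 / 4 - p * Real.exp s * (1 - p) / (c s) ^ 2 := by
    intro s
    have hcs := hc s
    rw [sub_nonneg, div_le_iff₀ (by positivity)]
    have h1 : 0 ≤ p * Real.exp s := by positivity
    have h2 : 0 ≤ 1 - p := by linarith
    have key : c s = (1 - p) + p * Real.exp s := rfl
    nlinarith [sq_nonneg ((1 - p) - p * Real.exp s)]
  have hg1mono : Monotone g1 :=
    monotone_of_deriv_nonneg (fun s => (hder2 s).differentiableAt) (by
      intro s
      rw [(hder2 s).deriv]
      exact hg2 s)
  have hg1zero : g1 0 = 0 := by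
    simp only [hg1_def, hc_def]
    norm_num
  have hg0 : g 0 = 0 := by
    simp only [hg_def, hc_def]
    norm_num
  have hgnonneg : ∀ s, 0 ≤ g s := by
    intro s
    rcases le_total 0 s with h | h
    · have : MonotoneOn g (Set.Ici 0) := by
        apply monotoneOn_of_deriv_nonneg (convex_Ici 0)
          (fun x _ => ((hder1 x).differentiableAt.continuousAt).continuousWithinAt)
          (fun x _ => (hder1 x).differentiableAt.differentiableWithinAt)
        intro x hx
        rw [(hder1 x).deriv]
        rw [interior_Ici] at hx
        calc (0:ℝ) = g1 0 := hg1zero.symm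
        _ ≤ g1 x := hg1mono (le_of_lt hx)
      have := this (Set.self_mem_Ici) (Set.mem_Ici.2 h) h
      linarith [hg0 ▸ this]
    · have : AntitoneOn g (Set.Iic 0) := by
        apply antitoneOn_of_deriv_nonpos (convex_Iic 0)
          (fun x _ => ((hder1 x).differentiableAt.continuousAt).continuousWithinAt)
          (fun x _ => (hder1 x).differentiableAt.differentiableWithinAt)
        intro x hx
        rw [(hder1 x).deriv]
        rw [interior_Iic] at hx
        calc g1 x ≤ g1 0 := hg1mono (le_of_lt hx)
        _ = 0 := hg1zero
      have := this (Set.mem_Iic.2 h) (Set.self_mem_Iic) h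
      linarith [hg0 ▸ this]
  have key := hgnonneg t
  have hlog : Real.log (c t) ≤ t ^ 2 / 8 + t * p := by
    simp only [hg_def] at key; linarith
  have hct : c t ≤ Real.exp (t ^ 2 / 8 + t * p) := by
    calc c t = Real.exp (Real.log (c t)) := (Real.exp_log (hc t)).symm
    _ ≤ _ := Real.exp_le_exp.2 hlog
  have : Real.exp (-(t * p)) * c t ≤ Real.exp (t ^ 2 / 8) := by
    calc Real.exp (-(t * p)) * c t ≤ Real.exp (-(t * p)) * Real.exp (t ^ 2 / 8 + t * p) := by
          exact mul_le_mul_of_nonneg_left hct (Real.exp_pos _).le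
    _ = Real.exp (t ^ 2 / 8) := by rw [← Real.exp_add]; ring_nf
  calc (1 - p) * Real.exp (-(t * p)) + p * Real.exp (t * (1 - p))
      = Real.exp (-(t * p)) * c t := by
        simp only [hc_def]
        rw [mul_add]
        congr 1
        · ring
        · rw [← mul_assoc, mul_comm (Real.exp (-(t*p))) p, mul_assoc, ← Real.exp_add]
          ring_nf
    _ ≤ _ := this

-- measure of finset as sum of singletons
lemma meas_finset {k : ℕ} (D : Measure (Fin k)) (A : Finset (Fin k)) :
    D ↑A = ∑ i ∈ A, D {i} := by
  have : (↑A : Set (Fin k)) = ⋃ i ∈ A, {i} := by ext x; simp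
  rw [this, measure_biUnion_finset]
  · intro i _ j _ hij
    simp [Function.onFun, Set.disjoint_singleton, hij]
  · intro i _; exact measurableSet_singleton i

lemma bhc_mgf {k : ℕ} (D : Measure (Fin k)) [IsProbabilityMeasure D]
    (A : Finset (Fin k)) (t : ℝ) :
    ∫ x, Real.exp (t * ((if x ∈ A then (1:ℝ) else 0) - (D ↑A).toReal)) ∂D
      ≤ Real.exp (t ^ 2 / 8) := by
  set p := (D ↑A).toReal with hp
  have hp0 : 0 ≤ p := ENNReal.toReal_nonneg
  have hp1 : p ≤ 1 := by
    rw [hp]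
    calc (D ↑A).toReal ≤ (D Set.univ).toReal := by
          apply ENNReal.toReal_mono (measure_ne_top _ _) (measure_mono (Set.subset_univ _))
    _ = 1 := by simp
  have hint : Integrable (fun x => Real.exp (t * ((if x ∈ A then (1:ℝ) else 0) - p))) D :=
    .of_finite
  rw [integral_fintype hint]
  simp only [measureReal_def]
  have hsplit : ∑ x : Fin k, (D {x}).toReal • Real.exp (t * ((if x ∈ A then (1:ℝ) else 0) - p))
      = (∑ x ∈ A, (D {x}).toReal) * Real.exp (t * (1 - p))
        + (∑ x ∈ Aᶜ, (D {x}).toReal) * Real.exp (-(t * p)) := by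
    rw [← Finset.sum_add_sum_compl A, Finset.sum_mul, Finset.sum_mul]
    congr 1
    · refine Finset.sum_congr rfl fun x hx => ?_
      rw [if_pos hx, smul_eq_mul]
    · refine Finset.sum_congr rfl fun x hx => ?_
      rw [Finset.mem_compl] at hx
      rw [if_neg hx, smul_eq_mul, zero_sub, mul_neg]
  rw [hsplit]
  have hA : ∑ x ∈ A, (D {x}).toReal = p := by
    rw [hp, meas_finset, ENNReal.toReal_sum (fun i _ => measure_ne_top _ _)]
  have huniv : ∑ x : Fin k, (D {x}).toReal = 1 := by
    have := meas_finset D Finset.univ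
    simp only [Finset.coe_univ] at this
    rw [← ENNReal.toReal_sum (fun i _ => measure_ne_top _ _), ← this]
    simp
  have hAc : ∑ x ∈ Aᶜ, (D {x}).toReal = 1 - p := by
    have := Finset.sum_add_sum_compl A (fun x => (D {x}).toReal)
    rw [huniv] at this
    rw [← hA]; linarith
  rw [hA, hAc]
  have := bhc_core p hp0 hp1 t
  linarith

lemma pi_integral_pow {k n : ℕ} (D : Measure (Fin k)) [IsProbabilityMeasure D] (f : Fin k → ℝ) :
    ∫ ω, ∏ j : Fin n, f (ω j) ∂(Measure.pi fun _ : Fin n => D) = (∫ x, f x ∂D) ^ n := by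
  letI : MeasureSpace (Fin k) := ⟨D⟩
  haveI : IsProbabilityMeasure (volume : Measure (Fin k)) := ‹IsProbabilityMeasure D›
  haveI : SigmaFinite (volume : Measure (Fin k)) := inferInstance
  have h := MeasureTheory.integral_fintype_prod_eq_pow (𝕜 := ℝ) (ι := Fin n) (μ := D) f
  simpa using h

lemma bhc_subset {k n : ℕ} (D : Measure (Fin k)) [IsProbabilityMeasure D]
    (A : Finset (Fin k)) (ε : ℝ) (hε0 : 0 < ε) :
    ((Measure.pi fun _ : Fin n => D)
      {ω | (n : ℝ) * ε / 2 ≤ ∑ j : Fin n,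
        ((if ω j ∈ A then (1:ℝ) else 0) - (D ↑A).toReal)}).toReal
      ≤ Real.exp (-(n : ℝ) * ε ^ 2 / 2) := by
  set μ := Measure.pi fun _ : Fin n => D with hμ
  haveI : IsProbabilityMeasure μ := by rw [hμ]; infer_instance
  set p := (D ↑A).toReal with hp
  set X : (Fin n → Fin k) → ℝ := fun ω => ∑ j : Fin n, ((if ω j ∈ A then (1:ℝ) else 0) - p)
    with hX
  have hint : Integrable (fun ω => Real.exp (2 * ε * X ω)) μ := .of_finite
  have hchern := measure_ge_le_exp_mul_mgf (X := X) (μ := μ) ((n : ℝ) * ε / 2)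
    (by positivity : (0:ℝ) ≤ 2 * ε) hint
  have hmgf : mgf X μ (2 * ε) ≤ Real.exp ((2 * ε) ^ 2 / 8) ^ n := by
    rw [mgf]
    have hrw : ∀ ω : Fin n → Fin k, Real.exp (2 * ε * X ω)
        = ∏ j : Fin n, Real.exp (2 * ε * ((if ω j ∈ A then (1:ℝ) else 0) - p)) := by
      intro ω
      rw [← Real.exp_sum, hX, Finset.mul_sum]
    simp_rw [hrw]
    rw [hμ, pi_integral_pow D (fun y => Real.exp (2 * ε * ((if y ∈ A then (1:ℝ) else 0) - p)))]
    apply pow_le_pow_left₀ _ (bhc_mgf D A (2 * ε))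
    exact integral_nonneg fun x => (Real.exp_pos _).le
  calc (μ {ω | (n : ℝ) * ε / 2 ≤ X ω}).toReal
      ≤ Real.exp (-(2 * ε) * ((n : ℝ) * ε / 2)) * mgf X μ (2 * ε) := hchern
    _ ≤ Real.exp (-(2 * ε) * ((n : ℝ) * ε / 2)) * Real.exp ((2 * ε) ^ 2 / 8) ^ n := by
        exact mul_le_mul_of_nonneg_left hmgf (Real.exp_pos _).le
    _ = Real.exp (-(n : ℝ) * ε ^ 2 / 2) := by
        rw [← Real.exp_nat_mul, ← Real.exp_add]
        congr 1
        ring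

lemma bhc_sum_singleton {k : ℕ} (D : Measure (Fin k)) [IsProbabilityMeasure D] :
    ∑ i : Fin k, (D {i}).toReal = 1 := by
  have h := meas_finset D Finset.univ
  simp only [Finset.coe_univ] at h
  rw [← ENNReal.toReal_sum (fun i _ => measure_ne_top _ _), ← h]
  simp

/-- Bretagnolle–Huber–Carol inequality: the L1 deviation of the empirical
distribution of n i.i.d. samples from a categorical distribution on k outcomes
exceeds ε with probability at most 2^k exp(−nε²/2). -/
theorem bretagnolle_huber_carol
    (k n : ℕ) (D : Measure (Fin k)) [IsProbabilityMeasure D]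
    (ε : ℝ) (hε0 : 0 < ε) (hε1 : ε < 1) :
    ((Measure.pi fun _ : Fin n => D)
        {ω | ε ≤ ∑ i : Fin k,
          |((Finset.univ.filter fun j => ω j = i).card : ℝ) / n - (D {i}).toReal|}).toReal
      ≤ 2 ^ k * Real.exp (-(n : ℝ) * ε ^ 2 / 2) := by
  set μ := Measure.pi fun _ : Fin n => D with hμ
  haveI : IsProbabilityMeasure μ := by rw [hμ]; infer_instance
  rcases Nat.eq_zero_or_pos n with hn | hn
  · subst hn
    simp only [Nat.cast_zero, neg_zero, zero_mul, zero_div, Real.exp_zero, mul_one]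
    calc (μ _).toReal ≤ (μ Set.univ).toReal :=
          ENNReal.toReal_mono (measure_ne_top _ _) (measure_mono (Set.subset_univ _))
      _ = 1 := by simp
      _ ≤ 2 ^ k := one_le_pow₀ (by norm_num)
  -- main case n > 0
  have hnR : (0:ℝ) < n := by exact_mod_cast hn
  set E : Set (Fin n → Fin k) := {ω | ε ≤ ∑ i : Fin k,
      |((Finset.univ.filter fun j => ω j = i).card : ℝ) / n - (D {i}).toReal|} with hE
  set EA : Finset (Fin k) → Set (Fin n → Fin k) := fun A =>
      {ω | (n : ℝ) * ε / 2 ≤ ∑ j : Fin n,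
        ((if ω j ∈ A then (1:ℝ) else 0) - (D ↑A).toReal)} with hEA
  have hsub : E ⊆ ⋃ A : Finset (Fin k), EA A := by
    intro ω hω
    simp only [hE, Set.mem_setOf_eq] at hω
    set d : Fin k → ℝ := fun i =>
      ((Finset.univ.filter fun j => ω j = i).card : ℝ) / n - (D {i}).toReal with hd
    set A : Finset (Fin k) := Finset.univ.filter fun i => 0 ≤ d i with hA
    -- total counts
    have hcount : ∑ i : Fin k, ((Finset.univ.filter fun j => ω j = i).card : ℕ) = n := by
      have := Finset.card_eq_sum_card_fiberwise
        (f := ω) (s := Finset.univ) (t := Finset.univ) (fun j _ => Finset.mem_univ _)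
      simpa using this.symm
    have hsum_d : ∑ i : Fin k, d i = 0 := by
      simp only [hd]
      rw [Finset.sum_sub_distrib, ← Finset.sum_div, bhc_sum_singleton D]
      rw [← Nat.cast_sum, hcount]
      field_simp
      ring
    have hsplit : ∑ i : Fin k, |d i| = 2 * ∑ i ∈ A, d i := by
      rw [← Finset.sum_add_sum_compl A (fun i => |d i|)]
      have h1 : ∑ i ∈ A, |d i| = ∑ i ∈ A, d i := by
        refine Finset.sum_congr rfl fun i hi => ?_
        rw [hA, Finset.mem_filter] at hi
        exact abs_of_nonneg hi.2
      have h2 : ∑ i ∈ Aᶜ, |d i| = -∑ i ∈ Aᶜ, d i := by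
        rw [← Finset.sum_neg_distrib]
        refine Finset.sum_congr rfl fun i hi => ?_
        rw [Finset.mem_compl, hA, Finset.mem_filter] at hi
        push_neg at hi
        exact abs_of_neg (hi (Finset.mem_univ i))
      have h3 : ∑ i ∈ A, d i + ∑ i ∈ Aᶜ, d i = 0 := by
        rw [Finset.sum_add_sum_compl]; exact hsum_d
      rw [h1, h2]; linarith
    have hεA : ε / 2 ≤ ∑ i ∈ A, d i := by
      rw [hsplit] at hω; linarith
    -- rewrite ∑_{i∈A} d i
    have hcard : ∑ i ∈ A, ((Finset.univ.filter fun j => ω j = i).card : ℝ)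
        = ∑ j : Fin n, (if ω j ∈ A then (1:ℝ) else 0) := by
      rw [Finset.sum_boole]
      push_cast
      have := Finset.card_eq_sum_card_fiberwise
        (f := ω) (s := Finset.univ.filter fun j => ω j ∈ A) (t := A)
        (fun j hj => (Finset.mem_filter.1 hj).2)
      rw [this]
      push_cast
      refine Finset.sum_congr rfl fun i hi => ?_
      congr 1
      rw [Finset.filter_filter]
      refine congrArg _ (Finset.filter_congr fun j _ => ?_)
      constructor
      · intro h
        exact ⟨by rw [h]; exact hi, h⟩
      · exact fun h => h.2
    have hmeasA : ∑ i ∈ A, (D {i}).toReal = (D ↑A).toReal := by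
      rw [meas_finset, ENNReal.toReal_sum (fun i _ => measure_ne_top _ _)]
    have hAd : ∑ i ∈ A, d i
        = (∑ j : Fin n, (if ω j ∈ A then (1:ℝ) else 0)) / n - (D ↑A).toReal := by
      simp only [hd]
      rw [Finset.sum_sub_distrib, ← Finset.sum_div, hcard, hmeasA]
    refine Set.mem_iUnion.2 ⟨A, ?_⟩
    simp only [hEA, Set.mem_setOf_eq]
    rw [Finset.sum_sub_distrib, Finset.sum_const, Finset.card_univ, Fintype.card_fin]
    rw [hAd] at hεA
    have h4 : ε / 2 * n ≤ (∑ j : Fin n, (if ω j ∈ A then (1:ℝ) else 0))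
        - n * (D ↑A).toReal := by
      have := mul_le_mul_of_nonneg_right hεA hnR.le
      rw [sub_mul, div_mul_cancel₀ _ hnR.ne'] at this
      linarith
    simpa [nsmul_eq_mul] using le_trans (by ring_nf; linarith) h4
  have hunion : μ E ≤ ∑ A : Finset (Fin k), μ (EA A) :=
    le_trans (measure_mono hsub) (measure_iUnion_fintype_le _ _)
  have hfin : (∑ A : Finset (Fin k), μ (EA A)) ≠ ⊤ :=
    (ENNReal.sum_lt_top.2 fun A _ => measure_lt_top _ _).ne
  calc (μ E).toReal ≤ (∑ A : Finset (Fin k), μ (EA A)).toReal :=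
        ENNReal.toReal_mono hfin hunion
    _ = ∑ A : Finset (Fin k), (μ (EA A)).toReal :=
        ENNReal.toReal_sum fun A _ => measure_ne_top _ _
    _ ≤ ∑ _A : Finset (Fin k), Real.exp (-(n : ℝ) * ε ^ 2 / 2) :=
        Finset.sum_le_sum fun A _ => bhc_subset D A ε hε0
    _ = 2 ^ k * Real.exp (-(n : ℝ) * ε ^ 2 / 2) := by
        rw [Finset.sum_const, Finset.card_univ, Fintype.card_finset, Fintype.card_fin,
          nsmul_eq_mul]
        push_cast
        ring
end
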